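/- The softmax cross-entropy loss lower-bounds mutual information up to log N: for finite ω and label y ∈ {1,...,N} uniformly distributed, and any scores G(ω,j), E_{p(ω,y)}[G(ω,y)] − log E_{p(ω)}[(1/N)Σ_j e^{G(ω,j)}] − log N ≤ I(y;ω). -/

import Mathlib

open Finset

/-- Mutual information of a joint pmf on a product of finite sets (natural log). -/
noncomputable def mutualInfo {A B : Type*} [Fintype A] [Fintype B] (p : A → B → ℝ) : ℝ :=
  ∑ a, ∑ b, p a b * Real.log (p a b / ((∑ b', p a b') * (∑ a', p a' b)))

/-- Softmax cross-entropy lower-bounds mutual information up to `log N`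
(uniform labels): the intermediate Donsker–Varadhan inequality. -/
theorem softmax_xent_le_mutualInfo {Ω : Type*} [Fintype Ω] {N : ℕ} (hN : 0 < N)
    (p : Ω → Fin N → ℝ) (hp : ∀ ω y, 0 ≤ p ω y) (hsum : ∑ ω, ∑ y, p ω y = 1)
    (hmargΩ : ∀ ω, 0 < ∑ y, p ω y)
    (huniform : ∀ y, ∑ ω, p ω y = 1 / N)
    (G : Ω → Fin N → ℝ) :
    (∑ ω, ∑ y, p ω y * G ω y) -
        Real.log (∑ ω, (∑ y', p ω y') * ((1 / N : ℝ) * ∑ j, Real.exp (G ω j))) -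
        Real.log N
      ≤ mutualInfo p := by
  have hNpos : (0:ℝ) < N := by exact_mod_cast hN
  have hNeΩ : Nonempty Ω := by
    by_contra h
    rw [not_nonempty_iff] at h
    simp [Finset.univ_eq_empty] at hsum
  have hNeN : Nonempty (Fin N) := ⟨⟨0, hN⟩⟩
  set q : Ω → Fin N → ℝ := fun ω y => (∑ y', p ω y') * (1 / N) with hqdef
  have hqpos : ∀ ω y, 0 < q ω y := fun ω y =>
    mul_pos (hmargΩ ω) (by positivity)
  set Z : ℝ := ∑ ω, ∑ y, q ω y * Real.exp (G ω y) with hZ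
  have hZpos : 0 < Z :=
    Finset.sum_pos (fun ω _ => Finset.sum_pos
      (fun y _ => mul_pos (hqpos ω y) (Real.exp_pos _)) Finset.univ_nonempty)
      Finset.univ_nonempty
  have hZeq : (∑ ω, (∑ y', p ω y') * ((1 / N : ℝ) * ∑ j, Real.exp (G ω j))) = Z := by
    rw [hZ]
    refine Finset.sum_congr rfl fun ω _ => ?_
    simp only [hqdef, Finset.mul_sum]
    exact Finset.sum_congr rfl fun y _ => by ring
  have hMI : mutualInfo p = ∑ ω, ∑ y, p ω y * Real.log (p ω y / q ω y) := by
    unfold mutualInfo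
    refine Finset.sum_congr rfl fun ω _ => Finset.sum_congr rfl fun y _ => ?_
    rw [huniform y]
  have key : ∀ ω y, p ω y * G ω y - p ω y * Real.log (p ω y / q ω y)
      ≤ q ω y * Real.exp (G ω y) / Z + p ω y * (Real.log Z - 1) := by
    intro ω y
    rcases eq_or_lt_of_le (hp ω y) with h0 | hpos
    · rw [← h0]
      simp only [zero_mul, sub_zero, zero_add, add_zero]
      exact le_of_lt (div_pos (mul_pos (hqpos ω y) (Real.exp_pos _)) hZpos)
    · set x := q ω y * Real.exp (G ω y) / (p ω y * Z) with hx
      have hxpos : 0 < x := div_pos (mul_pos (hqpos ω y) (Real.exp_pos _)) (mul_pos hpos hZpos)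
      have hlog : Real.log x ≤ x - 1 := Real.log_le_sub_one_of_pos hxpos
      have hlogx : Real.log x = Real.log (q ω y) + G ω y - Real.log (p ω y) - Real.log Z := by
        rw [hx, Real.log_div (ne_of_gt (mul_pos (hqpos ω y) (Real.exp_pos _))) (ne_of_gt (mul_pos hpos hZpos)),
          Real.log_mul (ne_of_gt (hqpos ω y)) (Real.exp_ne_zero _), Real.log_exp,
          Real.log_mul (ne_of_gt hpos) (ne_of_gt hZpos)]
        ring
      have hlogpq : Real.log (p ω y / q ω y) = Real.log (p ω y) - Real.log (q ω y) :=
        Real.log_div (ne_of_gt hpos) (ne_of_gt (hqpos ω y))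
      have hpx : p ω y * x = q ω y * Real.exp (G ω y) / Z := by
        rw [hx]
        field_simp
      have h1 : p ω y * Real.log x
          = p ω y * G ω y - p ω y * (Real.log (p ω y) - Real.log (q ω y))
            - p ω y * Real.log Z := by
        rw [hlogx]; ring
      have h2 : p ω y * Real.log x ≤ p ω y * (x - 1) :=
        mul_le_mul_of_nonneg_left hlog (le_of_lt hpos)
      rw [hlogpq]
      nlinarith [h1, h2, hpx]
  have hsumle : (∑ ω, ∑ y, p ω y * G ω y) - mutualInfo p ≤ Real.log Z := by
    rw [hMI]
    have hre : (∑ ω, ∑ y, p ω y * G ω y) - ∑ ω, ∑ y, p ω y * Real.log (p ω y / q ω y)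
        = ∑ ω, ∑ y, (p ω y * G ω y - p ω y * Real.log (p ω y / q ω y)) := by
      rw [← Finset.sum_sub_distrib]
      exact Finset.sum_congr rfl fun ω _ => (Finset.sum_sub_distrib _ _).symm
    rw [hre]
    calc ∑ ω, ∑ y, (p ω y * G ω y - p ω y * Real.log (p ω y / q ω y))
        ≤ ∑ ω, ∑ y, (q ω y * Real.exp (G ω y) / Z + p ω y * (Real.log Z - 1)) :=
          Finset.sum_le_sum fun ω _ => Finset.sum_le_sum fun y _ => key ω y
      _ = (∑ ω, ∑ y, q ω y * Real.exp (G ω y)) / Z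
            + (∑ ω, ∑ y, p ω y) * (Real.log Z - 1) := by
          simp only [Finset.sum_add_distrib, ← Finset.sum_div, ← Finset.sum_mul]
      _ = Real.log Z := by
          rw [hsum, ← hZ, div_self (ne_of_gt hZpos)]; ring
  have hlogN : 0 ≤ Real.log N := Real.log_nonneg (by exact_mod_cast hN)
  rw [hZeq]
  linarith [hsumle]
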